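/- (Lusztig's Lemma, finite case.) Let (B, ≤) be a finite partially ordered set, and let M be the free ℤ[q, q⁻¹]-module with basis {v_b : b ∈ B}. Let ψ : M → M be an additive map satisfying ψ(q^k m) = q^{-k} ψ(m) for all k ∈ ℤ, m ∈ M, such that ψ² = id and for every b, ψ(v_b) - v_b lies in the ℤ[q,q⁻¹]-span of {v_a : a > b}. Then for each b ∈ B there exists a unique element c_b ∈ M such that ψ(c_b) = c_b and c_b - v_b lies in the q·ℤ[q]-span of {v_a : a > b}. -/

import Mathlib

open LaurentPolynomial Polynomial

set_option linter.unusedSectionVars false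

/-- Coefficients supported in strictly positive degrees, i.e. membership in `q·ℤ[q]`. -/
def LPos (r : LaurentPolynomial ℤ) : Prop := ∀ n : ℤ, n ≤ 0 → r.coeff n = 0

lemma lpos_sub {r s : LaurentPolynomial ℤ} (hr : LPos r) (hs : LPos s) : LPos (r - s) := by
  intro n hn; rw [AddMonoidAlgebra.coeff_sub, Finsupp.sub_apply, hr n hn, hs n hn, sub_zero]

lemma lpos_add {r s : LaurentPolynomial ℤ} (hr : LPos r) (hs : LPos s) : LPos (r + s) := by
  intro n hn; rw [AddMonoidAlgebra.coeff_add, Finsupp.add_apply, hr n hn, hs n hn, add_zero]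

lemma lpos_mul {p s : LaurentPolynomial ℤ} (hp : LPos p) (hs : ∀ n : ℤ, n < 0 → s.coeff n = 0) :
    LPos (p * s) := by
  intro n hn
  classical
  rw [AddMonoidAlgebra.coeff_mul]
  rw [Finsupp.sum]
  apply Finset.sum_eq_zero
  intro a₁ ha₁
  rw [Finsupp.sum]
  apply Finset.sum_eq_zero
  intro a₂ ha₂
  rw [if_neg]
  have h1 : ¬ a₁ ≤ 0 := fun h => (Finsupp.mem_support_iff.mp ha₁) (hp a₁ h)
  have h2 : ¬ a₂ < 0 := fun h => (Finsupp.mem_support_iff.mp ha₂) (hs a₂ h)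
  omega

lemma lpos_invert_eq_zero {d : LaurentPolynomial ℤ} (hd : LPos d) (h : invert d = d) :
    d = 0 := by
  ext n
  rcases le_or_gt n 0 with hn | hn
  · rw [hd n hn]; rfl
  · have : d.coeff n = d.coeff (-n) := by conv_lhs => rw [← h, invert_apply]
    rw [this, hd (-n) (by omega)]; rfl

lemma lpos_toLaurent (f : Polynomial ℤ) : LPos (toLaurent (X * f)) := by
  intro n hn
  rw [map_mul, Polynomial.toLaurent_X]
  have : (T 1 : LaurentPolynomial ℤ) = AddMonoidAlgebra.single (1:ℤ) (1:ℤ) := rfl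
  rw [this, AddMonoidAlgebra.coeff_single_mul_apply, coeff_toLaurent]
  rw [Finsupp.mapDomain_notin_range]
  · ring
  · rintro ⟨k, hk⟩
    simp at hk
    omega

lemma lpos_exists {r : LaurentPolynomial ℤ} (h : LPos r) :
    ∃ f : Polynomial ℤ, r = toLaurent (X * f) := by
  classical
  refine ⟨∑ n ∈ r.coeff.support, Polynomial.monomial ((n-1).toNat) (r.coeff n), ?_⟩
  rw [Finset.mul_sum, map_sum]
  have : ∀ n ∈ r.coeff.support, toLaurent (X * Polynomial.monomial ((n-1).toNat) (r.coeff n))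
      = AddMonoidAlgebra.single n (r.coeff n) := by
    intro n hn
    have hn1 : 1 ≤ n := by
      by_contra hc
      exact Finsupp.mem_support_iff.mp hn (h n (by omega))
    have hcast : ((((n-1).toNat + 1 : ℕ)) : ℤ) = n := by omega
    rw [X_mul_monomial, Polynomial.toLaurent_C_mul_T, hcast, ← single_eq_C_mul_T]
  rw [Finset.sum_congr rfl this]
  apply AddMonoidAlgebra.coeff_injective
  rw [AddMonoidAlgebra.coeff_sum]
  simp only [AddMonoidAlgebra.coeff_single]
  exact (Finsupp.sum_single _).symm

lemma lhalf {r : LaurentPolynomial ℤ} (h : invert r = -r) :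
    ∃ p : LaurentPolynomial ℤ, LPos p ∧ p - invert p = r := by
  classical
  have h0 : ∀ n : ℤ, r.coeff (-n) = - r.coeff n := by
    intro n
    have : (invert r).coeff n = (-r).coeff n := by rw [h]
    rw [invert_apply, AddMonoidAlgebra.coeff_neg, Finsupp.neg_apply] at this
    exact this
  refine ⟨AddMonoidAlgebra.ofCoeff (Finsupp.filter (fun n => (0:ℤ) < n) r.coeff), ?_, ?_⟩
  · intro n hn
    rw [AddMonoidAlgebra.coeff_ofCoeff, Finsupp.filter_apply, if_neg (by omega)]
  · ext n
    rw [AddMonoidAlgebra.coeff_sub, Finsupp.sub_apply, invert_apply, AddMonoidAlgebra.coeff_ofCoeff,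
      Finsupp.filter_apply, Finsupp.filter_apply]
    rcases lt_trichotomy 0 n with hn | hn | hn
    · rw [if_pos hn, if_neg (by omega), sub_zero]
    · subst hn
      have : r.coeff 0 = - r.coeff 0 := by simpa using h0 0
      simp only [lt_self_iff_false, if_false, if_neg]
      omega
    · rw [if_neg (by omega), if_pos (by omega), zero_sub, h0 n, neg_neg]

lemma invert_fsingle (n : ℤ) (r : ℤ) :
    invert (AddMonoidAlgebra.single n r : LaurentPolynomial ℤ) = AddMonoidAlgebra.single (-n) r := by
  ext k
  rw [invert_apply, AddMonoidAlgebra.coeff_single, AddMonoidAlgebra.coeff_single,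
    Finsupp.single_apply, Finsupp.single_apply]
  by_cases h : n = -k
  · rw [if_pos h, if_pos (by omega)]
  · rw [if_neg h, if_neg (by omega)]

section
variable {B : Type*} [Fintype B] [PartialOrder B]
    (ψ : (B →₀ LaurentPolynomial ℤ) →+ (B →₀ LaurentPolynomial ℤ))
    (hbar : ∀ (k : ℤ) (m : B →₀ LaurentPolynomial ℤ),
      ψ ((T k : LaurentPolynomial ℤ) • m) = (T (-k) : LaurentPolynomial ℤ) • ψ m)

include hbar in
lemma psi_smul' (f : LaurentPolynomial ℤ) (m : B →₀ LaurentPolynomial ℤ) :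
    ψ (f • m) = invert f • ψ m := by
  induction f using AddMonoidAlgebra.induction_linear with
  | zero => simp
  | add f g hf hg =>
      rw [add_smul, map_add, hf, hg, map_add, add_smul]
  | single n r =>
      have h1 : ∀ k : ℤ, (AddMonoidAlgebra.single k r : LaurentPolynomial ℤ)
          = r • (T k : LaurentPolynomial ℤ) := by
        intro k; rw [T, AddMonoidAlgebra.smul_single, smul_eq_mul, mul_one]
      have h2 : invert (r • (T n : LaurentPolynomial ℤ))
          = r • (T (-n) : LaurentPolynomial ℤ) := by
        rw [map_zsmul, invert_T]
      rw [h1, smul_assoc, map_zsmul, hbar, ← smul_assoc, h2]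

include hbar in
lemma psi_apply' (m : B →₀ LaurentPolynomial ℤ) (a : B) :
    ψ m a = m.sum fun b r => invert r * (ψ (Finsupp.single b 1)) a := by
  conv_lhs => rw [← Finsupp.sum_single m]
  have hs : ∀ (b : B) (r : LaurentPolynomial ℤ),
      Finsupp.single b r = r • (Finsupp.single b 1 : B →₀ LaurentPolynomial ℤ) := by
    intro b r; rw [Finsupp.smul_single, smul_eq_mul, mul_one]
  rw [map_finsuppSum, Finsupp.sum_apply, Finsupp.sum, Finsupp.sum]
  refine Finset.sum_congr rfl fun b hb => ?_
  rw [hs b (m b), psi_smul' ψ hbar, Finsupp.smul_apply, smul_eq_mul]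

variable (htri : ∀ b a : B,
      ((ψ (Finsupp.single b 1) - Finsupp.single b 1 : B →₀ LaurentPolynomial ℤ)) a ≠ 0 → b < a)

include hbar htri in
lemma psi_min' (m : B →₀ LaurentPolynomial ℤ) (a : B)
    (hmin : ∀ b, m b ≠ 0 → ¬ b < a) : ψ m a = invert (m a) := by
  classical
  rw [psi_apply' ψ hbar]
  have key : ∀ b : B, (ψ (Finsupp.single b 1) : B →₀ LaurentPolynomial ℤ) a
      = (ψ (Finsupp.single b 1) - Finsupp.single b 1 : B →₀ LaurentPolynomial ℤ) a
        + (Finsupp.single b 1 : B →₀ LaurentPolynomial ℤ) a := by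
    intro b; rw [Finsupp.sub_apply]; ring
  rw [Finsupp.sum, Finset.sum_eq_single a]
  · have hD : (ψ (Finsupp.single a 1) - Finsupp.single a 1 : B →₀ LaurentPolynomial ℤ) a = 0 := by
      by_contra hc
      exact lt_irrefl a (htri a a hc)
    rw [key a, hD, Finsupp.single_eq_same, zero_add, mul_one]
  · intro b hb hba
    have hD : (ψ (Finsupp.single b 1) - Finsupp.single b 1 : B →₀ LaurentPolynomial ℤ) a = 0 := by
      by_contra hc
      exact hmin b (Finsupp.mem_support_iff.mp hb) (htri b a hc)
    rw [key b, hD, Finsupp.single_apply, if_neg hba, zero_add, mul_zero]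
  · intro ha
    rw [Finsupp.notMem_support_iff.mp ha, map_zero, zero_mul]

include hbar htri in
lemma key_lemma (b : B) (C : ∀ a : B, b < a → (B →₀ LaurentPolynomial ℤ))
    (hC1 : ∀ a h, ψ (C a h) = C a h)
    (hC2 : ∀ a h, (C a h) a = 1)
    (hC3 : ∀ a h a', a' ≠ a → ((C a h) a' ≠ 0 → a < a') ∧ LPos ((C a h) a')) :
    ∀ (n : ℕ) (x : B →₀ LaurentPolynomial ℤ),
      ({c : B | ∃ s ∈ x.support, s ≤ c}.ncard ≤ n) →
      ψ x = -x → (∀ a, x a ≠ 0 → b < a) →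
      ∃ y, ψ y - y = x ∧ (∀ a, y a ≠ 0 → b < a) ∧ (∀ a, LPos (y a)) := by
  classical
  intro n
  induction n using Nat.strong_induction_on with
  | _ n IH =>
  intro x hcard hx1 hx2
  by_cases hx0 : x = 0
  · refine ⟨0, by simp [hx0], by simp, fun a => ?_⟩
    intro k hk
    simp
  · obtain ⟨a₀, ha₀s, ha₀min⟩ := x.support.exists_minimal
      (Finsupp.support_nonempty_iff.mpr hx0)
    have hxa₀ : x a₀ ≠ 0 := Finsupp.mem_support_iff.mp ha₀s
    have hba₀ : b < a₀ := hx2 a₀ hxa₀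
    have hmin' : ∀ b', x b' ≠ 0 → ¬ b' < a₀ := fun b' h hlt =>
      hlt.not_ge (ha₀min (Finsupp.mem_support_iff.mpr h) hlt.le)
    have hanti : invert (x a₀) = - (x a₀) := by
      have h1 : ψ x a₀ = invert (x a₀) := psi_min' ψ hbar htri x a₀ hmin'
      rw [hx1] at h1
      rw [← h1, Finsupp.neg_apply]
    have hanti' : invert (- x a₀) = -(- x a₀) := by rw [map_neg, hanti, neg_neg]
    obtain ⟨p, hp, hpr⟩ := lhalf hanti'
    set c₀ := C a₀ hba₀ with hc₀def
    have hψc₀ := hC1 a₀ hba₀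
    have hc₀a₀ := hC2 a₀ hba₀
    -- properties of x' := x - (x a₀) • c₀
    have hx'1 : ψ (x - (x a₀) • c₀) = -(x - (x a₀) • c₀) := by
      rw [map_sub, psi_smul' ψ hbar, hψc₀, hx1, hanti, neg_smul]
      abel
    have hx'a₀ : (x - (x a₀) • c₀) a₀ = 0 := by
      rw [Finsupp.sub_apply, Finsupp.smul_apply, smul_eq_mul, hc₀a₀, mul_one, sub_self]
    have hx'2 : ∀ a, (x - (x a₀) • c₀) a ≠ 0 → b < a := by
      intro a ha
      rw [Finsupp.sub_apply, Finsupp.smul_apply, smul_eq_mul] at ha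
      by_cases h1 : x a ≠ 0
      · exact hx2 a h1
      · push_neg at h1
        have hc : c₀ a ≠ 0 := by
          intro h; apply ha; rw [h1, h, mul_zero, sub_zero]
        rcases eq_or_ne a a₀ with h | h
        · rw [h]; exact hba₀
        · exact lt_trans hba₀ ((hC3 a₀ hba₀ a h).1 hc)
    have hsub : {c : B | ∃ s ∈ (x - (x a₀) • c₀).support, s ≤ c}
        ⊂ {c : B | ∃ s ∈ x.support, s ≤ c} := by
      constructor
      · rintro c ⟨s, hs, hsc⟩
        rw [Finsupp.mem_support_iff, Finsupp.sub_apply, Finsupp.smul_apply, smul_eq_mul] at hs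
        by_cases h1 : x s ≠ 0
        · exact ⟨s, Finsupp.mem_support_iff.mpr h1, hsc⟩
        · push_neg at h1
          have hc : c₀ s ≠ 0 := by
            intro h; apply hs; rw [h1, h, mul_zero, sub_zero]
          have ha₀s' : a₀ ≤ s := by
            rcases eq_or_ne s a₀ with h | h
            · exact h.ge
            · exact ((hC3 a₀ hba₀ s h).1 hc).le
          exact ⟨a₀, ha₀s, le_trans ha₀s' hsc⟩
      · intro hss
        have ha₀mem : a₀ ∈ {c : B | ∃ s ∈ x.support, s ≤ c} := ⟨a₀, ha₀s, le_refl a₀⟩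
        obtain ⟨s, hs, hsa₀⟩ := hss ha₀mem
        rw [Finsupp.mem_support_iff] at hs
        rcases eq_or_ne s a₀ with h | h
        · rw [h] at hs; exact hs hx'a₀
        · have hslt : s < a₀ := lt_of_le_of_ne hsa₀ h
          rw [Finsupp.sub_apply, Finsupp.smul_apply, smul_eq_mul] at hs
          have hc₀s : c₀ s = 0 := by
            by_contra hc
            exact lt_asymm ((hC3 a₀ hba₀ s h).1 hc) hslt
          rw [hc₀s, mul_zero, sub_zero] at hs
          exact hmin' s hs hslt
    have hlt : {c : B | ∃ s ∈ (x - (x a₀) • c₀).support, s ≤ c}.ncard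
        < {c : B | ∃ s ∈ x.support, s ≤ c}.ncard :=
      Set.ncard_lt_ncard hsub (Set.toFinite _)
    obtain ⟨y', hy'1, hy'2, hy'3⟩ := IH _ (lt_of_lt_of_le hlt hcard) _ le_rfl hx'1 hx'2
    have h5 : invert p = p + x a₀ := by linear_combination -hpr
    refine ⟨p • c₀ + y', ?_, ?_, ?_⟩
    · have h6 : ψ y' = (x - (x a₀) • c₀) + y' := sub_eq_iff_eq_add.mp hy'1
      rw [map_add, psi_smul' ψ hbar, hψc₀, h6, h5, add_smul]
      abel
    · intro a ha
      rw [Finsupp.add_apply, Finsupp.smul_apply, smul_eq_mul] at ha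
      by_cases h1 : y' a ≠ 0
      · exact hy'2 a h1
      · push_neg at h1
        have hc : c₀ a ≠ 0 := by
          intro h; apply ha; rw [h1, h, mul_zero, add_zero]
        rcases eq_or_ne a a₀ with h | h
        · rw [h]; exact hba₀
        · exact lt_trans hba₀ ((hC3 a₀ hba₀ a h).1 hc)
    · intro a
      rw [Finsupp.add_apply, Finsupp.smul_apply, smul_eq_mul]
      refine lpos_add (lpos_mul hp ?_) (hy'3 a)
      intro k hk
      rcases eq_or_ne a a₀ with h | h
      · rw [h, hc₀a₀]
        have : (1 : LaurentPolynomial ℤ) = AddMonoidAlgebra.single (0:ℤ) (1:ℤ) := rfl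
        rw [this, AddMonoidAlgebra.coeff_single, Finsupp.single_apply, if_neg (by omega)]
      · exact (hC3 a₀ hba₀ a h).2 k hk.le

end

theorem stmt_16 (B : Type*) [Fintype B] [PartialOrder B]
    (ψ : (B →₀ LaurentPolynomial ℤ) →+ (B →₀ LaurentPolynomial ℤ))
    (hbar : ∀ (k : ℤ) (m : B →₀ LaurentPolynomial ℤ),
      ψ ((T k : LaurentPolynomial ℤ) • m) = (T (-k) : LaurentPolynomial ℤ) • ψ m)
    (hinv : ∀ m, ψ (ψ m) = m)
    (htri : ∀ b a : B,
      ((ψ (Finsupp.single b 1) - Finsupp.single b 1 : B →₀ LaurentPolynomial ℤ)) a ≠ 0 → b < a) :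
    ∀ b : B, ∃! c : B →₀ LaurentPolynomial ℤ,
      ψ c = c ∧
      (∀ a : B, ((c - Finsupp.single b 1 : B →₀ LaurentPolynomial ℤ)) a ≠ 0 → b < a) ∧
      (∀ a : B, ∃ f : Polynomial ℤ,
        ((c - Finsupp.single b 1 : B →₀ LaurentPolynomial ℤ)) a
          = Polynomial.toLaurent (Polynomial.X * f)) := by
  classical
  have main : ∀ b : B, ∃ c : B →₀ LaurentPolynomial ℤ,
      ψ c = c ∧
      (∀ a : B, ((c - Finsupp.single b 1 : B →₀ LaurentPolynomial ℤ)) a ≠ 0 → b < a) ∧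
      (∀ a : B, LPos ((c - Finsupp.single b 1 : B →₀ LaurentPolynomial ℤ) a)) := by
    refine fun b => WellFounded.induction
      (C := fun b => ∃ c : B →₀ LaurentPolynomial ℤ, ψ c = c ∧
        (∀ a : B, ((c - Finsupp.single b 1 : B →₀ LaurentPolynomial ℤ)) a ≠ 0 → b < a) ∧
        (∀ a : B, LPos ((c - Finsupp.single b 1 : B →₀ LaurentPolynomial ℤ) a)))
      wellFounded_gt b ?_
    intro b IH
    choose C hC using fun a (h : b < a) => IH a h
    have hC1 : ∀ a h, ψ (C a h) = C a h := fun a h => (hC a h).1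
    have hC2 : ∀ a h, (C a h) a = 1 := by
      intro a h
      have := (hC a h).2.1 a
      have h0 : (C a h - Finsupp.single a 1 : B →₀ LaurentPolynomial ℤ) a = 0 := by
        by_contra hc
        exact lt_irrefl a (this hc)
      rw [Finsupp.sub_apply, Finsupp.single_eq_same, sub_eq_zero] at h0
      exact h0
    have hoff : ∀ a h a', a' ≠ a →
        (C a h) a' = (C a h - Finsupp.single a 1 : B →₀ LaurentPolynomial ℤ) a' := by
      intro a h a' ha'
      rw [Finsupp.sub_apply, Finsupp.single_apply, if_neg (Ne.symm ha'), sub_zero]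
    have hC3 : ∀ a h a', a' ≠ a → ((C a h) a' ≠ 0 → a < a') ∧ LPos ((C a h) a') := by
      intro a h a' ha'
      rw [hoff a h a' ha']
      exact ⟨(hC a h).2.1 a', (hC a h).2.2 a'⟩
    set x : B →₀ LaurentPolynomial ℤ := Finsupp.single b 1 - ψ (Finsupp.single b 1) with hx
    have hx1 : ψ x = -x := by
      rw [hx, map_sub, hinv]
      abel
    have hx2 : ∀ a, x a ≠ 0 → b < a := by
      intro a ha
      apply htri b a
      rw [hx, Finsupp.sub_apply] at ha
      rw [Finsupp.sub_apply]
      intro hc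
      apply ha
      linear_combination -hc
    obtain ⟨y, hy1, hy2, hy3⟩ := key_lemma ψ hbar htri b C hC1 hC2 hC3 _ x le_rfl hx1 hx2
    refine ⟨Finsupp.single b 1 + y, ?_, ?_, ?_⟩
    · have h6 : ψ y = x + y := sub_eq_iff_eq_add.mp hy1
      rw [map_add, h6, hx]
      abel
    · intro a ha
      rw [add_sub_cancel_left] at ha
      exact hy2 a ha
    · intro a
      rw [add_sub_cancel_left]
      exact hy3 a
  intro b
  obtain ⟨c, hc1, hc2, hc3⟩ := main b
  refine ⟨c, ⟨hc1, hc2, fun a => lpos_exists (hc3 a)⟩, ?_⟩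
  rintro c' ⟨hc'1, hc'2, hc'3⟩
  by_contra hne
  have hd0 : c' - c ≠ 0 := sub_ne_zero.mpr hne
  have hdd : ∀ a, (c' - c) a
      = (c' - Finsupp.single b 1 : B →₀ LaurentPolynomial ℤ) a
        - (c - Finsupp.single b 1 : B →₀ LaurentPolynomial ℤ) a := by
    intro a
    rw [Finsupp.sub_apply, Finsupp.sub_apply, Finsupp.sub_apply]
    ring
  have hdψ : ψ (c' - c) = c' - c := by rw [map_sub, hc1, hc'1]
  have hdpos : ∀ a, LPos ((c' - c) a) := by
    intro a
    rw [hdd a]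
    obtain ⟨f, hf⟩ := hc'3 a
    rw [hf]
    exact lpos_sub (lpos_toLaurent f) (hc3 a)
  obtain ⟨a₀, ha₀s, ha₀min⟩ := (c' - c).support.exists_minimal
    (Finsupp.support_nonempty_iff.mpr hd0)
  have hmin' : ∀ b', (c' - c) b' ≠ 0 → ¬ b' < a₀ := fun b' h hlt =>
    hlt.not_ge (ha₀min (Finsupp.mem_support_iff.mpr h) hlt.le)
  have h1 : ψ (c' - c) a₀ = invert ((c' - c) a₀) := psi_min' ψ hbar htri _ a₀ hmin'
  rw [hdψ] at h1
  exact Finsupp.mem_support_iff.mp ha₀s (lpos_invert_eq_zero (hdpos a₀) h1.symm)
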